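/- arXiv:2409.04108 — 13 statements merged into one kernel-verified Lean document; each statement's English description precedes it below -/
import Mathlib

section
/- For a probability distribution π on a finite set X and α ∈ (0,1) ∪ (1,∞), the minimum over all probability distributions π̂ on X of the expected α-loss Σ_x π_x · (α/(α-1))·(1 - π̂_x^{(α-1)/α}) equals (α/(α-1))·(1 - exp(((1-α)/α)·H_α(π))), where H_α(π) = (1/(1-α))·log Σ_x π_x^α is the Rényi entropy, and the minimum is achieved by π̂_x* = π_x^α / Σ_{x'} π_{x'}^α. -/
/-- Bernoulli-type inequality for negative exponents: for `t > 0` and `β ≤ 0`,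
`1 + β*(t-1) ≤ t ^ β`. -/
lemma bern_neg {t β : ℝ} (ht : 0 < t) (hβ : β ≤ 0) : 1 + β * (t - 1) ≤ t ^ β := by
  have hlog : Real.log t ≤ t - 1 := Real.log_le_sub_one_of_pos ht
  have hexp := Real.add_one_le_exp (β * Real.log t)
  have h3 : Real.exp (β * Real.log t) = t ^ β := by
    rw [Real.rpow_def_of_pos ht, mul_comm]
  nlinarith

/-- Bernoulli-type inequality for exponents in `[0,1]`: for `t > 0`,
`t ^ β ≤ 1 + β*(t-1)`. -/
lemma bern_pos {t β : ℝ} (ht : 0 < t) (h0 : 0 ≤ β) (h1 : β ≤ 1) : t ^ β ≤ 1 + β * (t - 1) := by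
  have h := rpow_one_add_le_one_add_mul_self (s := t - 1) (by linarith) h0 h1
  have e : (1 : ℝ) + (t - 1) = t := by ring
  rwa [e] at h

/-- For a full-support probability distribution `π` on a finite set `X` and
`α ∈ (0,1) ∪ (1,∞)`, the minimum over (full-support) probability distributions `p` on `X`
of the expected α-loss `∑ x, π x • (α/(α-1))•(1 - p x ^ ((α-1)/α))` equals
`(α/(α-1))·(1 - exp(((1-α)/α)·H_α(π)))`, and it is attained at `p* x = π x ^ α / ∑ x', π x' ^ α`. -/
theorem stmt_0 {X : Type*} [Fintype X] [Nonempty X]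
    (π : X → ℝ) (hπ : ∀ x, 0 < π x) (hsum : ∑ x, π x = 1)
    (α : ℝ) (hα : 0 < α) (hα1 : α ≠ 1) :
    IsLeast
      {v : ℝ | ∃ p : X → ℝ, (∀ x, 0 < p x) ∧ ∑ x, p x = 1 ∧
        v = ∑ x, π x * (α / (α - 1) * (1 - p x ^ ((α - 1) / α)))}
      (α / (α - 1) *
        (1 - Real.exp (((1 - α) / α) * ((1 / (1 - α)) * Real.log (∑ x, π x ^ α))))) ∧
    ∑ x, π x * (α / (α - 1) * (1 - (π x ^ α / ∑ x', π x' ^ α) ^ ((α - 1) / α))) =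
      α / (α - 1) *
        (1 - Real.exp (((1 - α) / α) * ((1 / (1 - α)) * Real.log (∑ x, π x ^ α)))) := by
  have hα0 : α ≠ 0 := hα.ne'
  have hD : α - 1 ≠ 0 := sub_ne_zero.mpr hα1
  have h1α : (1 : ℝ) - α ≠ 0 := sub_ne_zero.mpr (Ne.symm hα1)
  set T : ℝ := ∑ x, π x ^ α with hTdef
  have hTpos : 0 < T :=
    Finset.sum_pos (fun x _ => Real.rpow_pos_of_pos (hπ x) α) Finset.univ_nonempty
  set β : ℝ := (α - 1) / α with hβdef
  have hαβ : α * β = α - 1 := by rw [hβdef]; field_simp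
  have hβ1 : 1 / α - 1 + β = 0 := by rw [hβdef]; field_simp; ring
  have h1β : 1 - β = 1 / α := by rw [hβdef]; field_simp; ring
  -- the exp expression equals T ^ (1/α)
  have hexp : Real.exp (((1 - α) / α) * ((1 / (1 - α)) * Real.log T)) = T ^ (1 / α) := by
    rw [Real.rpow_def_of_pos hTpos]
    congr 1
    field_simp
  -- rewriting the objective
  have hval : ∀ p : X → ℝ,
      ∑ x, π x * (α / (α - 1) * (1 - p x ^ β)) =
        α / (α - 1) - α / (α - 1) * ∑ x, π x * p x ^ β := by
    intro p
    have h : ∑ x, π x * (α / (α - 1) * (1 - p x ^ β)) =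
        α / (α - 1) * ∑ x, π x - α / (α - 1) * ∑ x, π x * p x ^ β := by
      rw [Finset.mul_sum, Finset.mul_sum, ← Finset.sum_sub_distrib]
      exact Finset.sum_congr rfl fun x _ => by ring
    rw [h, hsum, mul_one]
  -- value at the optimizer
  have hopt : ∑ x, π x * (π x ^ α / T) ^ β = T ^ (1 / α) := by
    calc ∑ x, π x * (π x ^ α / T) ^ β
        = ∑ x, π x ^ α / T ^ β := by
          refine Finset.sum_congr rfl fun x _ => ?_
          have hπx := hπ x
          rw [Real.div_rpow (Real.rpow_pos_of_pos hπx α).le hTpos.le,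
            ← Real.rpow_mul hπx.le, hαβ]
          rw [show α = 1 + (α - 1) by ring, Real.rpow_add hπx, Real.rpow_one]
          ring
      _ = T / T ^ β := by rw [← Finset.sum_div]
      _ = T ^ (1 : ℝ) / T ^ β := by rw [Real.rpow_one]
      _ = T ^ (1 - β) := (Real.rpow_sub hTpos 1 β).symm
      _ = T ^ (1 / α) := by rw [h1β]
  -- key inequality
  have key : ∀ p : X → ℝ, (∀ x, 0 < p x) → ∑ x, p x = 1 →
      (α - 1) * ∑ x, π x * p x ^ β ≤ (α - 1) * T ^ (1 / α) := by
    intro p hp hpsum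
    have hpt : ∀ x : X,
        (α - 1) * (π x * p x ^ β) ≤
          (α - 1) * (T ^ (1 / α - 1) * ((1 - β) * π x ^ α + β * T * p x)) := by
      intro x
      have hπx := hπ x
      have hpx := hp x
      have hπα : (0 : ℝ) < π x ^ α := Real.rpow_pos_of_pos hπx α
      set t : ℝ := p x * T / π x ^ α with htdef
      have ht : 0 < t := by positivity
      have hid : π x * p x ^ β = T ^ (1 / α - 1) * (π x ^ α * t ^ β) := by
        rw [htdef, Real.div_rpow (by positivity) hπα.le,
          Real.mul_rpow hpx.le hTpos.le, ← Real.rpow_mul hπx.le, hαβ]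
        rw [show π x ^ α * (p x ^ β * T ^ β / π x ^ (α - 1)) =
            (π x ^ α / π x ^ (α - 1)) * p x ^ β * T ^ β by ring,
          ← Real.rpow_sub hπx, show α - (α - 1) = 1 by ring, Real.rpow_one]
        rw [show T ^ (1 / α - 1) * (π x * p x ^ β * T ^ β) =
            (T ^ (1 / α - 1) * T ^ β) * (π x * p x ^ β) by ring,
          ← Real.rpow_add hTpos, hβ1, Real.rpow_zero, one_mul]
      have he3 : π x ^ α * (1 + β * (t - 1)) = (1 - β) * π x ^ α + β * T * p x := by
        rw [htdef]
        field_simp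
        ring
      rw [hid, ← he3]
      have hA : (0 : ℝ) ≤ T ^ (1 / α - 1) * π x ^ α := by positivity
      rcases hα1.lt_or_gt with hlt | hgt
      · -- α < 1, β ≤ 0
        have hβneg : β ≤ 0 := by
          rw [hβdef]
          apply div_nonpos_of_nonpos_of_nonneg <;> linarith
        have hb := bern_neg ht hβneg
        have h1 : T ^ (1 / α - 1) * π x ^ α * (1 + β * (t - 1)) ≤
            T ^ (1 / α - 1) * π x ^ α * t ^ β := mul_le_mul_of_nonneg_left hb hA
        nlinarith [h1]
      · -- α > 1, β ∈ [0,1]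
        have hβ0 : 0 ≤ β := by
          rw [hβdef]; apply div_nonneg <;> linarith
        have hβle : β ≤ 1 := by
          rw [hβdef, div_le_one hα]; linarith
        have hb := bern_pos ht hβ0 hβle
        have h1 : T ^ (1 / α - 1) * π x ^ α * t ^ β ≤
            T ^ (1 / α - 1) * π x ^ α * (1 + β * (t - 1)) := mul_le_mul_of_nonneg_left hb hA
        nlinarith [h1]
    have hTT : T ^ (1 / α - 1) * T = T ^ (1 / α) := by
      nth_rewrite 2 [show T = T ^ (1 : ℝ) by rw [Real.rpow_one]]
      rw [← Real.rpow_add hTpos]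
      norm_num
    calc (α - 1) * ∑ x, π x * p x ^ β
        = ∑ x, (α - 1) * (π x * p x ^ β) := by rw [Finset.mul_sum]
      _ ≤ ∑ x, (α - 1) * (T ^ (1 / α - 1) * ((1 - β) * π x ^ α + β * T * p x)) :=
          Finset.sum_le_sum fun x _ => hpt x
      _ = ∑ x, ((α - 1) * T ^ (1 / α - 1) * (1 - β) * π x ^ α +
            (α - 1) * T ^ (1 / α - 1) * β * T * p x) :=
          Finset.sum_congr rfl fun x _ => by ring
      _ = (α - 1) * T ^ (1 / α - 1) * (1 - β) * (∑ x, π x ^ α) +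
            (α - 1) * T ^ (1 / α - 1) * β * T * (∑ x, p x) := by
          rw [Finset.sum_add_distrib, ← Finset.mul_sum, ← Finset.mul_sum]
      _ = (α - 1) * (T ^ (1 / α - 1) * T) := by rw [← hTdef, hpsum]; ring
      _ = (α - 1) * T ^ (1 / α) := by rw [hTT]
  -- value attained at the optimizer
  have hattain : ∑ x, π x * (α / (α - 1) * (1 - (π x ^ α / T) ^ β)) =
      α / (α - 1) * (1 - T ^ (1 / α)) := by
    rw [hval (fun x => π x ^ α / T), hopt]
    ring
  refine ⟨⟨⟨fun x => π x ^ α / T,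
      fun x => div_pos (Real.rpow_pos_of_pos (hπ x) α) hTpos, ?_, ?_⟩, ?_⟩, ?_⟩
  · show ∑ x, π x ^ α / T = 1
    rw [← Finset.sum_div, ← hTdef, div_self hTpos.ne']
  · rw [hexp]; exact hattain.symm
  · rintro v ⟨p, hp, hpsum, rfl⟩
    rw [hval p, hexp]
    have h := key p hp hpsum
    set S := ∑ x, π x * p x ^ β with hSdef
    have h2 : 0 ≤ (α - 1) * (T ^ (1 / α) - S) := by nlinarith [h]
    have h3 : α / (α - 1) * (T ^ (1 / α) - S) =
        α / (α - 1) ^ 2 * ((α - 1) * (T ^ (1 / α) - S)) := by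
      field_simp
    have h4 : 0 ≤ α / (α - 1) ^ 2 * ((α - 1) * (T ^ (1 / α) - S)) :=
      mul_nonneg (by positivity) h2
    nlinarith [h3, h4]
  · rw [hexp]; exact hattain
end

section
/- Fix α ∈ (1,∞) and let f_α(t) = t^{(α-1)/α} with inverse f_α^{-1}(s) = s^{α/(α-1)}. For a probability distribution π on a finite set X, the supremum over probability distributions w on X of f_α^{-1}(Σ_x π_x · f_α(w_x)) equals (Σ_x π_x^α)^{1/(α-1)} = exp(-H_α(π)), and the supremum is attained at w_x* = π_x^α / Σ_{x'} π_{x'}^α. -/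
/-- For `α > 1`, `f_α(t) = t^((α-1)/α)` with inverse `s ↦ s^(α/(α-1))`,
the supremum over probability distributions `w` on `X` of `(∑ x, π x * (w x)^((α-1)/α))^(α/(α-1))`
equals `(∑ x, π x ^ α)^(1/(α-1)) = exp(-H_α(π))`, attained at `w* x = π x ^ α / ∑ x', π x' ^ α`. -/
theorem stmt_1 {X : Type*} [Fintype X] [Nonempty X]
    (π : X → ℝ) (hπ : ∀ x, 0 ≤ π x) (hsum : ∑ x, π x = 1)
    (α : ℝ) (hα : 1 < α) :
    IsGreatest
      {v : ℝ | ∃ w : X → ℝ, (∀ x, 0 ≤ w x) ∧ ∑ x, w x = 1 ∧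
        v = (∑ x, π x * w x ^ ((α - 1) / α)) ^ (α / (α - 1))}
      ((∑ x, π x ^ α) ^ (1 / (α - 1))) ∧
    (∑ x, π x * (π x ^ α / ∑ x', π x' ^ α) ^ ((α - 1) / α)) ^ (α / (α - 1)) =
      (∑ x, π x ^ α) ^ (1 / (α - 1)) ∧
    (∑ x, π x ^ α) ^ (1 / (α - 1)) =
      Real.exp (-((1 / (1 - α)) * Real.log (∑ x, π x ^ α))) := by
  have hα0 : (0:ℝ) < α := lt_trans one_pos hα
  have hα1 : (0:ℝ) < α - 1 := sub_pos.mpr hα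
  set S : ℝ := ∑ x, π x ^ α with hSdef
  have hS0 : 0 ≤ S := Finset.sum_nonneg fun x _ => Real.rpow_nonneg (hπ x) α
  have hSpos : 0 < S := by
    obtain ⟨x, hx⟩ : ∃ x, π x ≠ 0 := by
      by_contra h
      push_neg at h
      simp [h] at hsum
    have hxpos : 0 < π x := lt_of_le_of_ne (hπ x) (Ne.symm hx)
    have : 0 < π x ^ α := Real.rpow_pos_of_pos hxpos α
    exact lt_of_lt_of_le this (Finset.single_le_sum
      (fun y _ => Real.rpow_nonneg (hπ y) α) (Finset.mem_univ x))
  -- the value at the claimed maximizer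
  have hkey : ∑ x, π x * (π x ^ α / S) ^ ((α - 1) / α) = S ^ ((1:ℝ) / α) := by
    have hterm : ∀ x, π x * (π x ^ α / S) ^ ((α - 1) / α)
        = π x ^ α / S ^ ((α - 1) / α) := by
      intro x
      rw [Real.div_rpow (Real.rpow_nonneg (hπ x) α) hS0,
        ← Real.rpow_mul (hπ x)]
      have h1 : α * ((α - 1) / α) = α - 1 := by field_simp
      rw [h1, ← mul_div_assoc]
      congr 1
      nth_rewrite 1 [← Real.rpow_one (π x)]
      rw [← Real.rpow_add' (hπ x) (by intro h; linarith : (1:ℝ) + (α - 1) ≠ 0) ]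
      norm_num
    rw [Finset.sum_congr rfl fun x _ => hterm x, ← Finset.sum_div, ← hSdef]
    have h2 : (1:ℝ)/α = 1 - (α - 1)/α := by field_simp; ring
    rw [h2, Real.rpow_sub hSpos, Real.rpow_one]
  have hpow : (S ^ ((1:ℝ) / α)) ^ (α / (α - 1)) = S ^ ((1:ℝ) / (α - 1)) := by
    rw [← Real.rpow_mul hS0]
    congr 1
    field_simp
  have hattain : (∑ x, π x * (π x ^ α / S) ^ ((α - 1) / α)) ^ (α / (α - 1))
      = S ^ ((1:ℝ) / (α - 1)) := by rw [hkey, hpow]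
  refine ⟨⟨?_, ?_⟩, hattain, ?_⟩
  · -- membership: take w = π^α / S
    refine ⟨fun x => π x ^ α / S, fun x => div_nonneg (Real.rpow_nonneg (hπ x) α) hS0, ?_, ?_⟩
    · rw [← Finset.sum_div, ← hSdef, div_self (ne_of_gt hSpos)]
    · exact hattain.symm
  · -- upper bound via Hölder
    rintro v ⟨w, hw0, hw1, rfl⟩
    have hβ : ∀ x, 0 ≤ w x ^ ((α - 1) / α) := fun x => Real.rpow_nonneg (hw0 x) _
    have hconj : Real.HolderConjugate α (α / (α - 1)) := by
      rw [Real.holderConjugate_iff]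
      constructor
      · exact hα
      · rw [inv_eq_one_div, inv_eq_one_div]
        field_simp
        ring
    have hHolder := Real.inner_le_Lp_mul_Lq_of_nonneg (s := Finset.univ)
      (f := π) (g := fun x => w x ^ ((α - 1) / α)) hconj
      (fun x _ => hπ x) (fun x _ => hβ x)
    have hg : ∑ x, (w x ^ ((α - 1) / α)) ^ (α / (α - 1)) = 1 := by
      have hgx : ∀ x, (w x ^ ((α - 1) / α)) ^ (α / (α - 1)) = w x := by
        intro x
        rw [← Real.rpow_mul (hw0 x)]
        have : (α - 1) / α * (α / (α - 1)) = 1 := by field_simp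
        rw [this, Real.rpow_one]
      simp_rw [hgx]
      exact hw1
    rw [hg, Real.one_rpow, mul_one] at hHolder
    have hsumnn : 0 ≤ ∑ x, π x * w x ^ ((α - 1) / α) :=
      Finset.sum_nonneg fun x _ => mul_nonneg (hπ x) (hβ x)
    have := Real.rpow_le_rpow hsumnn hHolder (le_of_lt (div_pos hα0 hα1))
    calc (∑ x, π x * w x ^ ((α - 1) / α)) ^ (α / (α - 1))
        ≤ ((∑ x, π x ^ α) ^ ((1:ℝ)/α)) ^ (α / (α - 1)) := this
      _ = S ^ ((1:ℝ) / (α - 1)) := hpow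
  · -- the exp form
    rw [Real.rpow_def_of_pos hSpos]
    congr 1
    have hne : (1:ℝ) - α ≠ 0 := by linarith
    field_simp
    ring
end

section
/- For every α ∈ (0,1) ∪ (1,∞), the function π ↦ (Σ_{x∈X} π_x^α)^{1/(α-1)} (equivalently, ‖π‖_α^{α/(α-1)}) is convex on the probability simplex over a finite set X. -/
open scoped ENNReal

/-- Transfer convexity along a function equal on the set. -/
lemma convexOn_congr' {E : Type*} [AddCommGroup E] [Module ℝ E] {s : Set E} {f g : E → ℝ}
    (hf : ConvexOn ℝ s f) (h : ∀ x ∈ s, f x = g x) : ConvexOn ℝ s g :=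
  ⟨hf.1, fun x hx y hy a b ha hb hab => by
    rw [← h _ hx, ← h _ hy, ← h _ (hf.1 hx hy ha hb hab)]
    exact hf.2 hx hy ha hb hab⟩

/-- Composition: convex monotone outer on a convex set `t`, convex inner mapping into `t`. -/
lemma convexOn_comp_mono {E : Type*} [AddCommGroup E] [Module ℝ E] {s : Set E} {t : Set ℝ}
    {f : E → ℝ} {g : ℝ → ℝ} (hg : ConvexOn ℝ t g) (hf : ConvexOn ℝ s f)
    (hmono : MonotoneOn g t) (hmaps : Set.MapsTo f s t) :
    ConvexOn ℝ s (fun x => g (f x)) := by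
  refine ⟨hf.1, fun x hx y hy a b ha hb hab => ?_⟩
  have hxt := hmaps hx
  have hyt := hmaps hy
  have hct : a * f x + b * f y ∈ t := by
    simpa using hg.1 hxt hyt ha hb hab
  have hft : f (a • x + b • y) ∈ t := hmaps (hf.1 hx hy ha hb hab)
  calc g (f (a • x + b • y)) ≤ g (a * f x + b * f y) :=
        hmono hft hct (hf.2 hx hy ha hb hab)
    _ ≤ a * g (f x) + b * g (f y) := by simpa using hg.2 hxt hyt ha hb hab

/-- Composition: convex antitone outer on a convex set `t`, concave inner mapping into `t`. -/
lemma convexOn_comp_anti {E : Type*} [AddCommGroup E] [Module ℝ E] {s : Set E} {t : Set ℝ}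
    {f : E → ℝ} {g : ℝ → ℝ} (hg : ConvexOn ℝ t g) (hf : ConcaveOn ℝ s f)
    (hanti : AntitoneOn g t) (hmaps : Set.MapsTo f s t) :
    ConvexOn ℝ s (fun x => g (f x)) := by
  refine ⟨hf.1, fun x hx y hy a b ha hb hab => ?_⟩
  have hxt := hmaps hx
  have hyt := hmaps hy
  have hct : a * f x + b * f y ∈ t := by
    simpa using hg.1 hxt hyt ha hb hab
  have hft : f (a • x + b • y) ∈ t := hmaps (hf.1 hx hy ha hb hab)
  calc g (f (a • x + b • y)) ≤ g (a * f x + b * f y) :=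
        hanti hct hft (hf.2 hx hy ha hb hab)
    _ ≤ a * g (f x) + b * g (f y) := by simpa using hg.2 hxt hyt ha hb hab

/-- `x ↦ x ^ β` is convex on `(0, ∞)` for `β ≤ 0`. -/
lemma convexOn_rpow_neg {β : ℝ} (hβ : β ≤ 0) :
    ConvexOn ℝ (Set.Ioi (0:ℝ)) (fun x : ℝ => x ^ β) := by
  have hlog : ConvexOn ℝ (Set.Ioi (0:ℝ)) (fun x : ℝ => β * Real.log x) := by
    have h1 : ConvexOn ℝ (Set.Ioi (0:ℝ)) (fun x : ℝ => -Real.log x) :=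
      strictConcaveOn_log_Ioi.concaveOn.neg
    have h2 := h1.smul (c := -β) (by linarith)
    refine convexOn_congr' h2 fun x _ => ?_
    simp only [smul_eq_mul]; ring
  have hexp : ConvexOn ℝ (Set.Ioi (0:ℝ)) (fun x : ℝ => Real.exp (β * Real.log x)) :=
    convexOn_comp_mono (t := Set.univ) (convexOn_exp) hlog
      (Real.exp_monotone.monotoneOn _) (Set.mapsTo_univ _ _)
  refine convexOn_congr' hexp fun x hx => ?_
  rw [Real.rpow_def_of_pos hx, mul_comm]

/-- For every `α ∈ (0,1) ∪ (1,∞)`, `π ↦ (∑ x, π x ^ α)^(1/(α-1))`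
(equivalently `‖π‖_α^(α/(α-1))`) is convex on the probability simplex over a finite set `X`. -/
theorem stmt_3 {X : Type*} [Fintype X] [Nonempty X]
    (α : ℝ) (hα0 : 0 < α) (hα1 : α ≠ 1) :
    ConvexOn ℝ (stdSimplex ℝ X) (fun π : X → ℝ => (∑ x, π x ^ α) ^ (1 / (α - 1))) := by
  rcases lt_or_gt_of_ne hα1 with hlt | hgt
  · -- case `0 < α < 1` : inner sum is concave and ≥ 1, outer negative power convex antitone
    have hβ : 1 / (α - 1) ≤ 0 := by
      apply div_nonpos_of_nonneg_of_nonpos <;> linarith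
    -- concavity of the sum
    have hterm : ∀ x : X, ConcaveOn ℝ (stdSimplex ℝ X) (fun π : X → ℝ => π x ^ α) := by
      intro x
      have h1 := (Real.concaveOn_rpow hα0.le hlt.le).comp_linearMap (LinearMap.proj (R := ℝ)
        (φ := fun _ : X => ℝ) x)
      exact h1.subset (fun π hπ => hπ.1 x) (convex_stdSimplex ℝ X)
    have hsum : ConcaveOn ℝ (stdSimplex ℝ X) (fun π : X → ℝ => ∑ x, π x ^ α) := by
      classical
      have : ∀ s : Finset X, ConcaveOn ℝ (stdSimplex ℝ X) (fun π : X → ℝ => ∑ x ∈ s, π x ^ α) := by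
        intro s
        induction s using Finset.induction with
        | empty => simpa using concaveOn_const (0:ℝ) (convex_stdSimplex ℝ X)
        | @insert a s ha ih =>
          simp only [Finset.sum_insert ha]
          exact (hterm _).add ih
      exact this Finset.univ
    -- the sum is at least 1 on the simplex
    have hmaps : Set.MapsTo (fun π : X → ℝ => ∑ x, π x ^ α) (stdSimplex ℝ X) (Set.Ici (1:ℝ)) := by
      intro π hπ
      have hle : ∀ x : X, π x ≤ ∑ y, π y := fun x =>
        Finset.single_le_sum (fun y _ => hπ.1 y) (Finset.mem_univ x)
      have h1 : (1:ℝ) = ∑ x, π x := hπ.2.symm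
      have : ∑ x, π x ≤ ∑ x, π x ^ α := by
        apply Finset.sum_le_sum
        intro x _
        rcases eq_or_lt_of_le (hπ.1 x) with h0 | h0
        · rw [← h0, Real.zero_rpow hα0.ne']
        · have hx1 : π x ≤ 1 := by rw [hπ.2] at hle; exact hle x
          calc π x = π x ^ (1:ℝ) := (Real.rpow_one _).symm
            _ ≤ π x ^ α := Real.rpow_le_rpow_of_exponent_ge h0 hx1 hlt.le
      simpa [Set.mem_Ici, ← hπ.2] using this
    have houter : ConvexOn ℝ (Set.Ici (1:ℝ)) (fun x : ℝ => x ^ (1 / (α - 1))) :=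
      (convexOn_rpow_neg hβ).subset (fun x hx => Set.mem_Ioi.mpr (lt_of_lt_of_le one_pos (Set.mem_Ici.mp hx))) (convex_Ici _)
    have hanti : AntitoneOn (fun x : ℝ => x ^ (1 / (α - 1))) (Set.Ici (1:ℝ)) :=
      fun x hx y _ hxy => Real.rpow_le_rpow_of_nonpos (lt_of_lt_of_le one_pos hx) hxy hβ
    exact convexOn_comp_anti houter hsum hanti hmaps
  · -- case `α > 1` : use the `ℓ^α` norm
    set p : ℝ≥0∞ := ENNReal.ofReal α with hp
    haveI : Fact (1 ≤ p) := ⟨by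
      rw [hp, ← ENNReal.ofReal_one]
      exact ENNReal.ofReal_le_ofReal hgt.le⟩
    have hptr : p.toReal = α := ENNReal.toReal_ofReal hα0.le
    -- the ℓ^α norm as a function on X → ℝ
    set N : (X → ℝ) → ℝ :=
      fun π => ‖(WithLp.linearEquiv p ℝ (∀ _ : X, ℝ)).symm π‖ with hN
    have hNconv : ConvexOn ℝ (stdSimplex ℝ X) N := by
      have h1 : ConvexOn ℝ Set.univ (norm : PiLp p (fun _ : X => ℝ) → ℝ) := convexOn_univ_norm
      have h2 := h1.comp_linearMap ((WithLp.linearEquiv p ℝ (∀ _ : X, ℝ)).symm.toLinearMap)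
      exact h2.subset (fun _ _ => Set.mem_univ _) (convex_stdSimplex ℝ X)
    have hNval : ∀ π ∈ stdSimplex ℝ X, N π = (∑ x, π x ^ α) ^ (1 / α) := by
      intro π hπ
      show ‖(WithLp.linearEquiv p ℝ (∀ _ : X, ℝ)).symm π‖ = _
      rw [PiLp.norm_eq_sum (by rw [hptr]; exact hα0)]
      rw [hptr]
      congr 1
      refine Finset.sum_congr rfl fun x _ => ?_
      have : ‖(WithLp.linearEquiv p ℝ (∀ _ : X, ℝ)).symm π x‖ = |π x| := rfl
      rw [this, abs_of_nonneg (hπ.1 x)]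
    have hNnonneg : Set.MapsTo N (stdSimplex ℝ X) (Set.Ici (0:ℝ)) :=
      fun π _ => norm_nonneg _
    have hq : 1 ≤ α / (α - 1) := by
      rw [le_div_iff₀ (by linarith)]
      linarith
    have houter : ConvexOn ℝ (Set.Ici (0:ℝ)) (fun x : ℝ => x ^ (α / (α - 1))) :=
      convexOn_rpow hq
    have hmono : MonotoneOn (fun x : ℝ => x ^ (α / (α - 1))) (Set.Ici (0:ℝ)) :=
      fun x hx y _ hxy => Real.rpow_le_rpow hx hxy (by linarith)
    have hcomp : ConvexOn ℝ (stdSimplex ℝ X) (fun π => N π ^ (α / (α - 1))) :=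
      convexOn_comp_mono houter hNconv hmono hNnonneg
    refine convexOn_congr' hcomp fun π hπ => ?_
    rw [hNval π hπ]
    have hsum0 : (0:ℝ) ≤ ∑ x, π x ^ α :=
      Finset.sum_nonneg fun x _ => Real.rpow_nonneg (hπ.1 x) _
    rw [← Real.rpow_mul hsum0]
    congr 1
    have h2 : α - 1 ≠ 0 := sub_ne_zero.2 (ne_of_gt hgt)
    field_simp
end

section
/- Let f: ℝ → ℝ be strictly monotone and continuous on an interval containing the range of a gain function g, with f^{-1} convex. For each guess w, the map π ↦ f^{-1}(Σ_{x∈X} π_x · f(g(w,x))) is convex in π on the probability simplex; consequently the generalized prior vulnerability V_{f,g}(π) = sup_{w∈W} f^{-1}(Σ_x π_x f(g(w,x))), as a pointwise supremum of convex functions, is convex in π. -/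
/-- If `f` is strictly monotone and continuous with convex inverse `finv`, then for
each guess `w` the map `π ↦ finv (∑ x, π x * f (g w x))` is convex on the probability simplex,
and hence the generalized prior vulnerability `V_{f,g}(π) = ⨆ w, finv (∑ x, π x * f (g w x))`
is convex on the simplex (assuming the supremum is finite for every prior). -/
theorem stmt_4 {X W : Type*} [Fintype X] [Nonempty X]
    (f finv : ℝ → ℝ) (g : W → X → ℝ)
    (hmono : StrictMono f ∨ StrictAnti f) (hcont : Continuous f)
    (hinv : Function.LeftInverse finv f)
    (hconv : ConvexOn ℝ Set.univ finv)
    (hbdd : ∀ π ∈ stdSimplex ℝ X,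
      BddAbove (Set.range fun w : W => finv (∑ x, π x * f (g w x)))) :
    (∀ w : W, ConvexOn ℝ (stdSimplex ℝ X)
        (fun π : X → ℝ => finv (∑ x, π x * f (g w x)))) ∧
    ConvexOn ℝ (stdSimplex ℝ X)
      (fun π : X → ℝ => ⨆ w : W, finv (∑ x, π x * f (g w x))) := by
  have key : ∀ w : W, ConvexOn ℝ (stdSimplex ℝ X)
      (fun π : X → ℝ => finv (∑ x, π x * f (g w x))) := by
    intro w
    have h := hconv.comp_linearMap (E := X → ℝ)
      { toFun := fun π => ∑ x, π x * f (g w x)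
        map_add' := by intro a b; simp [add_mul, Finset.sum_add_distrib]
        map_smul' := by intro c a; simp [Finset.mul_sum, mul_assoc] }
    exact h.subset (by simp) (convex_stdSimplex ℝ X)
  refine ⟨key, ?_⟩
  rcases isEmpty_or_nonempty W with hW | hW
  · have : (fun π : X → ℝ => ⨆ w : W, finv (∑ x, π x * f (g w x)))
        = fun _ => (0 : ℝ) := by
      funext π
      exact Real.iSup_of_isEmpty _
    rw [this]
    exact convexOn_const 0 (convex_stdSimplex ℝ X)
  · refine ⟨convex_stdSimplex ℝ X, ?_⟩
    intro p hp q hq a b ha hb hab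
    refine ciSup_le fun w => ?_
    calc finv (∑ x, (a • p + b • q) x * f (g w x))
        ≤ a • finv (∑ x, p x * f (g w x)) + b • finv (∑ x, q x * f (g w x)) :=
          (key w).2 hp hq ha hb hab
      _ ≤ a • (⨆ w, finv (∑ x, p x * f (g w x)))
          + b • (⨆ w, finv (∑ x, q x * f (g w x))) := by
          gcongr
          · exact le_ciSup (hbdd p hp) w
          · exact le_ciSup (hbdd q hq) w
end

section
/- Let V: ΔX → ℝ be a convex function on the probability simplex, and let h be either convex and strictly increasing or concave and strictly decreasing (with continuous inverse h^{-1}). Define V̂_h[π, C] = h^{-1}(Σ_y p(y)·h(V(δ^y))). Then for any channels C: X → Y and R: Y → Z, the data-processing inequality holds: V̂_h[π, C] ≥ V̂_h[π, C·R], where C·R is the composed channel. -/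
/-- Data-processing inequality for the Kolmogorov–Nagumo posterior vulnerability:
if `V` is convex on the simplex and `h` is either convex and strictly increasing or concave and
strictly decreasing (continuous, with inverse `hinv`), then for channels `C : X → Y` and
`R : Y → Z`, `V̂_h[π, C·R] ≤ V̂_h[π, C]`. -/
theorem stmt_7 {X Y Z : Type*} [Fintype X] [Fintype Y] [Fintype Z]
    (π : X → ℝ) (hπ0 : ∀ x, 0 ≤ π x) (hπ1 : ∑ x, π x = 1)
    (C : X → Y → ℝ) (hC0 : ∀ x y, 0 ≤ C x y) (hC1 : ∀ x, ∑ y, C x y = 1)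
    (R : Y → Z → ℝ) (hR0 : ∀ y z, 0 ≤ R y z) (hR1 : ∀ y, ∑ z, R y z = 1)
    (V : (X → ℝ) → ℝ) (hV : ConvexOn ℝ (stdSimplex ℝ X) V)
    (h hinv : ℝ → ℝ) (hcont : Continuous h)
    (hli : Function.LeftInverse hinv h)
    (hcase : (ConvexOn ℝ Set.univ h ∧ StrictMono h) ∨
      (ConcaveOn ℝ Set.univ h ∧ StrictAnti h)) :
    hinv (∑ z, (∑ x, π x * ∑ y, C x y * R y z) *
        h (V fun x => π x * (∑ y, C x y * R y z) /
            ∑ x', π x' * ∑ y, C x' y * R y z)) ≤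
      hinv (∑ y, (∑ x, π x * C x y) *
        h (V fun x => π x * C x y / ∑ x', π x' * C x' y)) := by
  classical
  set p : Y → ℝ := fun y => ∑ x, π x * C x y with hpdef
  set q : Z → ℝ := fun z => ∑ x, π x * ∑ y, C x y * R y z with hqdef
  set dy : Y → X → ℝ := fun y x => π x * C x y / p y with hdydef
  set dz : Z → X → ℝ := fun z x => π x * (∑ y, C x y * R y z) / q z with hdzdef
  show hinv (∑ z, q z * h (V (dz z))) ≤ hinv (∑ y, p y * h (V (dy y)))
  have hp0 : ∀ y, 0 ≤ p y := fun y =>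
    Finset.sum_nonneg fun x _ => mul_nonneg (hπ0 x) (hC0 x y)
  have hs0 : ∀ x z, 0 ≤ ∑ y, C x y * R y z := fun x z =>
    Finset.sum_nonneg fun y _ => mul_nonneg (hC0 x y) (hR0 y z)
  have hq0 : ∀ z, 0 ≤ q z := fun z =>
    Finset.sum_nonneg fun x _ => mul_nonneg (hπ0 x) (hs0 x z)
  have hqalt : ∀ z, q z = ∑ y, p y * R y z := by
    intro z
    rw [hqdef, hpdef]
    simp only [Finset.mul_sum, Finset.sum_mul]
    rw [Finset.sum_comm]
    exact Finset.sum_congr rfl fun x _ => Finset.sum_congr rfl fun y _ => by ring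
  have hpsum : ∑ y, p y = 1 := by
    rw [hpdef]
    rw [Finset.sum_comm]
    simp only [← Finset.mul_sum]
    rw [← hπ1]
    exact Finset.sum_congr rfl fun x _ => by rw [hC1 x, mul_one]
  have hqsum : ∑ z, q z = 1 := by
    simp only [hqalt]
    rw [Finset.sum_comm]
    simp only [← Finset.mul_sum]
    rw [← hpsum]
    exact Finset.sum_congr rfl fun y _ => by rw [hR1 y, mul_one]
  have hπC0 : ∀ y, p y = 0 → ∀ x, π x * C x y = 0 := by
    intro y hy x
    have := (Finset.sum_eq_zero_iff_of_nonneg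
      (fun x _ => mul_nonneg (hπ0 x) (hC0 x y))).mp (hpdef ▸ hy)
    exact this x (Finset.mem_univ x)
  have hdy_mem : ∀ y, p y ≠ 0 → dy y ∈ stdSimplex ℝ X := by
    intro y hy
    refine ⟨fun x => div_nonneg (mul_nonneg (hπ0 x) (hC0 x y)) (hp0 y), ?_⟩
    rw [hdydef]
    simp only
    rw [← Finset.sum_div]
    exact div_self hy
  have hdz_mem : ∀ z, q z ≠ 0 → dz z ∈ stdSimplex ℝ X := by
    intro z hz
    refine ⟨fun x => div_nonneg (mul_nonneg (hπ0 x) (hs0 x z)) (hq0 z), ?_⟩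
    rw [hdzdef]
    simp only
    rw [← Finset.sum_div]
    exact div_self hz
  -- key decomposition of dz as a convex combination of dy
  have hdz_eq : ∀ z, q z ≠ 0 → ∀ x,
      dz z x = ∑ y, (p y * R y z / q z) * dy y x := by
    intro z hz x
    have hterm : ∀ y, (p y * R y z / q z) * dy y x = π x * C x y * R y z / q z := by
      intro y
      by_cases hy : p y = 0
      · rw [hπC0 y hy x, hy]; simp
      · rw [hdydef]; field_simp
    rw [Finset.sum_congr rfl fun y _ => hterm y]
    rw [hdzdef]
    simp only
    rw [← Finset.sum_div, Finset.mul_sum]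
    congr 1
    exact Finset.sum_congr rfl fun y _ => by ring
  -- Jensen for V
  have hVz : ∀ z, q z ≠ 0 →
      V (dz z) ≤ ∑ y, (p y * R y z / q z) * V (dy y) := by
    intro z hz
    set t : Finset Y := Finset.univ.filter (fun y => p y ≠ 0) with ht
    set u : Y → ℝ := fun y => p y * R y z / q z with hu
    have hu0 : ∀ y, 0 ≤ u y := fun y =>
      div_nonneg (mul_nonneg (hp0 y) (hR0 y z)) (hq0 z)
    have huzero : ∀ y, y ∉ t → u y = 0 := by
      intro y hy
      rw [ht] at hy
      simp only [Finset.mem_filter, Finset.mem_univ, true_and, not_not] at hy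
      rw [hu]; simp [hy]
    have husum : ∑ y ∈ t, u y = 1 := by
      rw [Finset.sum_subset (Finset.subset_univ t) (fun y _ hy => huzero y hy)]
      rw [hu]
      simp only
      rw [← Finset.sum_div, ← hqalt]
      exact div_self hz
    have hpt : dz z = ∑ y ∈ t, u y • dy y := by
      funext x
      rw [hdz_eq z hz x, Finset.sum_apply]
      rw [Finset.sum_subset (Finset.subset_univ t)
        (fun y _ hy => by rw [Pi.smul_apply, huzero y hy, zero_smul])]
      exact Finset.sum_congr rfl fun y _ => by rw [Pi.smul_apply, smul_eq_mul]
    have hmem : ∀ y ∈ t, dy y ∈ stdSimplex ℝ X := by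
      intro y hy
      rw [ht] at hy
      simp only [Finset.mem_filter, Finset.mem_univ, true_and] at hy
      exact hdy_mem y hy
    have hJ := hV.map_sum_le (fun y _ => hu0 y) husum hmem
    rw [← hpt] at hJ
    have hext : ∑ y ∈ t, u y • V (dy y) = ∑ y, u y * V (dy y) := by
      rw [Finset.sum_subset (Finset.subset_univ t)
        (fun y _ hy => by rw [show (u y • V (dy y) : ℝ) = u y * V (dy y) from rfl,
          huzero y hy, zero_mul])]
      exact Finset.sum_congr rfl fun y _ => rfl
    exact hJ.trans_eq hext
  -- key per-z inequality, in each case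
  have husum' : ∀ z, q z ≠ 0 → ∑ y, (p y * R y z / q z) = 1 := by
    intro z hz
    rw [← Finset.sum_div, ← hqalt]
    exact div_self hz
  have hqzero : ∀ z, q z = 0 → ∀ y, p y * R y z = 0 := by
    intro z hz y
    have := (Finset.sum_eq_zero_iff_of_nonneg
      (fun y _ => mul_nonneg (hp0 y) (hR0 y z))).mp ((hqalt z).symm.trans hz)
    exact this y (Finset.mem_univ y)
  have hmul : ∀ z, q z ≠ 0 → ∀ y, q z * (p y * R y z / q z * h (V (dy y)))
      = p y * R y z * h (V (dy y)) := by
    intro z hz y; field_simp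
  -- A and B are in the range of h
  have hrange : Convex ℝ (Set.range h) := by
    have : IsPreconnected (Set.range h) := isPreconnected_range hcont
    exact this.ordConnected.convex
  have hA : (∑ z, q z * h (V (dz z))) ∈ Set.range h := by
    have := hrange.sum_mem (t := Finset.univ) (fun z _ => hq0 z) hqsum
      (fun z _ => Set.mem_range_self (f := h) (V (dz z)))
    simpa using this
  have hB : (∑ y, p y * h (V (dy y))) ∈ Set.range h := by
    have := hrange.sum_mem (t := Finset.univ) (fun y _ => hp0 y) hpsum
      (fun y _ => Set.mem_range_self (f := h) (V (dy y)))
    simpa using this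
  obtain ⟨a, ha⟩ := hA
  obtain ⟨b, hb⟩ := hB
  rw [← ha, ← hb, hli a, hli b]
  rcases hcase with ⟨hconv, hmono⟩ | ⟨hconc, hanti⟩
  · -- increasing convex case: A ≤ B
    have key : ∀ z, q z * h (V (dz z)) ≤ ∑ y, p y * R y z * h (V (dy y)) := by
      intro z
      by_cases hz : q z = 0
      · rw [hz, zero_mul]
        rw [Finset.sum_congr rfl fun y _ => by rw [hqzero z hz y, zero_mul]]
        simp
      · have h1 : h (V (dz z)) ≤ h (∑ y, (p y * R y z / q z) * V (dy y)) :=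
          hmono.monotone (hVz z hz)
        have h2 : h (∑ y, (p y * R y z / q z) * V (dy y)) ≤
            ∑ y, (p y * R y z / q z) * h (V (dy y)) := by
          have := hconv.map_sum_le (t := Finset.univ)
            (fun y _ => div_nonneg (mul_nonneg (hp0 y) (hR0 y z)) (hq0 z))
            (husum' z hz) (fun y _ => Set.mem_univ (V (dy y)))
          simpa [smul_eq_mul] using this
        have h3 := mul_le_mul_of_nonneg_left (h1.trans h2) (hq0 z)
        refine h3.trans_eq ?_
        rw [Finset.mul_sum]
        exact Finset.sum_congr rfl fun y _ => hmul z hz y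
    have hAB : (∑ z, q z * h (V (dz z))) ≤ ∑ y, p y * h (V (dy y)) := by
      refine (Finset.sum_le_sum fun z _ => key z).trans_eq ?_
      rw [Finset.sum_comm]
      exact Finset.sum_congr rfl fun y _ => by
        rw [← Finset.sum_mul, ← Finset.mul_sum, hR1 y, mul_one]
    rw [← ha, ← hb] at hAB
    exact hmono.le_iff_le.mp hAB
  · -- decreasing concave case: A ≥ B
    have key : ∀ z, ∑ y, p y * R y z * h (V (dy y)) ≤ q z * h (V (dz z)) := by
      intro z
      by_cases hz : q z = 0
      · rw [hz, zero_mul]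
        rw [Finset.sum_congr rfl fun y _ => by rw [hqzero z hz y, zero_mul]]
        simp
      · have h1 : h (∑ y, (p y * R y z / q z) * V (dy y)) ≤ h (V (dz z)) :=
          hanti.antitone (hVz z hz)
        have h2 : (∑ y, (p y * R y z / q z) * h (V (dy y))) ≤
            h (∑ y, (p y * R y z / q z) * V (dy y)) := by
          have := hconc.le_map_sum (t := Finset.univ)
            (fun y _ => div_nonneg (mul_nonneg (hp0 y) (hR0 y z)) (hq0 z))
            (husum' z hz) (fun y _ => Set.mem_univ (V (dy y)))
          simpa [smul_eq_mul] using this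
        have h3 := mul_le_mul_of_nonneg_left (h2.trans h1) (hq0 z)
        refine Eq.trans_le ?_ h3
        rw [Finset.mul_sum]
        exact (Finset.sum_congr rfl fun y _ => hmul z hz y).symm
    have hBA : (∑ y, p y * h (V (dy y))) ≤ ∑ z, q z * h (V (dz z)) := by
      refine Eq.trans_le ?_ (Finset.sum_le_sum fun z _ => key z)
      rw [Finset.sum_comm]
      exact (Finset.sum_congr rfl fun y _ => by
        rw [← Finset.sum_mul, ← Finset.mul_sum, hR1 y, mul_one]).symm
    rw [← ha, ← hb] at hBA
    exact (hanti.le_iff_ge.mp hBA)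
end

section
/- Let V: ΔX → ℝ be quasi-convex on the probability simplex (V of any convex combination is at most the max of the values). Define the max-case posterior vulnerability V̂^max[π, C] = max_{y: p(y)>0} V(δ^y). Then for any channels C: X → Y and R: Y → Z, V̂^max[π, C] ≥ V̂^max[π, C·R]. -/
open Classical in
/-- If `V` is quasi-convex on the simplex, then the max-case posterior vulnerability
satisfies the data-processing inequality: for channels `C : X → Y` and `R : Y → Z`,
`max_{z : q z > 0} V(δ^z) ≤ max_{y : p y > 0} V(δ^y)`. -/
theorem stmt_8 {X Y Z : Type*} [Fintype X] [Fintype Y] [Fintype Z]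
    (π : X → ℝ) (hπ0 : ∀ x, 0 ≤ π x) (hπ1 : ∑ x, π x = 1)
    (C : X → Y → ℝ) (hC0 : ∀ x y, 0 ≤ C x y) (hC1 : ∀ x, ∑ y, C x y = 1)
    (R : Y → Z → ℝ) (hR0 : ∀ y z, 0 ≤ R y z) (hR1 : ∀ y, ∑ z, R y z = 1)
    (V : (X → ℝ) → ℝ) (hV : QuasiconvexOn ℝ (stdSimplex ℝ X) V)
    (hY : (Finset.univ.filter fun y : Y => 0 < ∑ x, π x * C x y).Nonempty)
    (hZ : (Finset.univ.filter fun z : Z =>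
      0 < ∑ x, π x * ∑ y, C x y * R y z).Nonempty) :
    (Finset.univ.filter fun z : Z => 0 < ∑ x, π x * ∑ y, C x y * R y z).sup' hZ
        (fun z => V fun x => π x * (∑ y, C x y * R y z) /
          ∑ x', π x' * ∑ y, C x' y * R y z) ≤
      (Finset.univ.filter fun y : Y => 0 < ∑ x, π x * C x y).sup' hY
        (fun y => V fun x => π x * C x y / ∑ x', π x' * C x' y) := by
  classical
  set p : Y → ℝ := fun y => ∑ x, π x * C x y with hp
  set S := Finset.univ.filter fun y : Y => 0 < ∑ x, π x * C x y with hS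
  set M := S.sup' hY (fun y => V fun x => π x * C x y / ∑ x', π x' * C x' y) with hM
  have hpy0 : ∀ y, 0 ≤ p y := fun y =>
    Finset.sum_nonneg fun x _ => mul_nonneg (hπ0 x) (hC0 x y)
  have hzero : ∀ y, p y = 0 → ∀ x, π x * C x y = 0 := by
    intro y hy x
    have := (Finset.sum_eq_zero_iff_of_nonneg
      (fun x _ => mul_nonneg (hπ0 x) (hC0 x y))).mp hy
    exact this x (Finset.mem_univ x)
  apply Finset.sup'_le
  intro z hz
  rw [Finset.mem_filter] at hz
  set q := ∑ x, π x * ∑ y, C x y * R y z with hq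
  have hq0 : 0 < q := hz.2
  have hqswap : q = ∑ y, p y * R y z := by
    rw [hq]
    simp_rw [Finset.mul_sum]
    rw [Finset.sum_comm]
    simp_rw [hp, Finset.sum_mul]
    congr 1; funext y; congr 1; funext x; ring
  set w : Y → ℝ := fun y => p y * R y z / q with hw
  set δy : Y → X → ℝ := fun y x => π x * C x y / p y with hδ
  have hSsum : ∑ y ∈ S, p y * R y z = q := by
    rw [hqswap]
    apply Finset.sum_subset (Finset.subset_univ S)
    intro y _ hyS
    have : ¬ 0 < p y := by
      intro h
      exact hyS (Finset.mem_filter.mpr ⟨Finset.mem_univ y, h⟩)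
    have hpy : p y = 0 := le_antisymm (not_lt.mp this) (hpy0 y)
    rw [hpy, zero_mul]
  have hsum_w : ∑ y ∈ S, w y = 1 := by
    rw [hw]
    simp only
    rw [← Finset.sum_div, hSsum, div_self (ne_of_gt hq0)]
  have hcomb : (fun x => π x * (∑ y, C x y * R y z) / q) = ∑ y ∈ S, w y • δy y := by
    funext x
    simp only [Finset.sum_apply, Pi.smul_apply, smul_eq_mul]
    have h1 : π x * (∑ y, C x y * R y z) / q = ∑ y, π x * C x y * R y z / q := by
      rw [Finset.mul_sum, Finset.sum_div]
      congr 1; funext y; ring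
    rw [h1]
    have h2 : ∑ y : Y, π x * C x y * R y z / q = ∑ y ∈ S, π x * C x y * R y z / q := by
      symm
      apply Finset.sum_subset (Finset.subset_univ S)
      intro y _ hyS
      have : ¬ 0 < p y := fun h =>
        hyS (Finset.mem_filter.mpr ⟨Finset.mem_univ y, h⟩)
      have hpy : p y = 0 := le_antisymm (not_lt.mp this) (hpy0 y)
      rw [hzero y hpy x, zero_mul, zero_div]
    rw [h2]
    apply Finset.sum_congr rfl
    intro y hyS
    have hpy : 0 < p y := (Finset.mem_filter.mp hyS).2
    rw [hw, hδ]
    field_simp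
  have hconv := hV M
  have hmem : (fun x => π x * (∑ y, C x y * R y z) / q) ∈
      {u | u ∈ stdSimplex ℝ X ∧ V u ≤ M} := by
    rw [hcomb]
    apply hconv.sum_mem
    · intro y _
      exact div_nonneg (mul_nonneg (hpy0 y) (hR0 y z)) (le_of_lt hq0)
    · exact hsum_w
    · intro y hyS
      have hpy : 0 < p y := (Finset.mem_filter.mp hyS).2
      constructor
      · constructor
        · intro x
          exact div_nonneg (mul_nonneg (hπ0 x) (hC0 x y)) (le_of_lt hpy)
        · rw [hδ]
          simp only
          rw [← Finset.sum_div, div_self (ne_of_gt hpy)]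
      · simpa [hδ, hp, hM, -Finset.le_sup'_iff] using
          Finset.le_sup' (fun y => V fun x => π x * C x y / ∑ x', π x' * C x' y) hyS
  exact hmem.2
end

section
/- Suppose f is strictly increasing and continuous with f^{-1} multiplicative (f^{-1}(ab) = f^{-1}(a)·f^{-1}(b) for all a, b in its domain) and all quantities below are positive. Then for any gain function g, prior π, and channel C, the generalized posterior vulnerability with h = f satisfies V̂_{f,f,g}[π,C] = f^{-1}(Σ_y sup_w Σ_x C_{x,y} π_x f(g(w,x))) ≤ f^{-1}(Σ_y max_x C_{x,y}) · V_{f,g}(π), and hence the multiplicative leakage satisfies log(V̂_{f,f,g}[π,C]/V_{f,g}(π)) ≤ log f^{-1}(Σ_y max_x C_{x,y}). -/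
/-- If `f` is strictly increasing and continuous with multiplicative inverse
`finv`, `f ∘ g` is nonnegative and all quantities are positive, then
`V̂_{f,f,g}[π,C] = finv (∑ y, ⨆ w, ∑ x, C x y * π x * f (g w x))` satisfies
`V̂_{f,f,g}[π,C] ≤ finv (∑ y, max_x C x y) * V_{f,g}(π)`, and hence
`log (V̂_{f,f,g}[π,C] / V_{f,g}(π)) ≤ log (finv (∑ y, max_x C x y))`. -/
theorem stmt_10 {X Y W : Type*} [Fintype X] [Fintype Y] [Nonempty X] [Nonempty W]
    (π : X → ℝ) (hπ0 : ∀ x, 0 ≤ π x) (hπ1 : ∑ x, π x = 1)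
    (C : X → Y → ℝ) (hC0 : ∀ x y, 0 ≤ C x y) (hC1 : ∀ x, ∑ y, C x y = 1)
    (f finv : ℝ → ℝ) (g : W → X → ℝ)
    (hf : StrictMono f) (hfc : Continuous f)
    (hli : Function.LeftInverse finv f)
    (hfinvm : Monotone finv) (hfinvc : Continuous finv)
    (hmul : ∀ a b : ℝ, 0 ≤ a → 0 ≤ b → finv (a * b) = finv a * finv b)
    (hg0 : ∀ w x, 0 ≤ f (g w x))
    (hbdd0 : BddAbove (Set.range fun w : W => ∑ x, π x * f (g w x)))
    (hbdd1 : BddAbove (Set.range fun w : W => finv (∑ x, π x * f (g w x))))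
    (hbdd2 : ∀ y : Y, BddAbove (Set.range fun w : W => ∑ x, C x y * π x * f (g w x)))
    (hVpos : 0 < ⨆ w : W, finv (∑ x, π x * f (g w x)))
    (hVhatpos : 0 < finv (∑ y, ⨆ w : W, ∑ x, C x y * π x * f (g w x))) :
    finv (∑ y, ⨆ w : W, ∑ x, C x y * π x * f (g w x)) ≤
      finv (∑ y, ⨆ x, C x y) * (⨆ w : W, finv (∑ x, π x * f (g w x))) ∧
    Real.log (finv (∑ y, ⨆ w : W, ∑ x, C x y * π x * f (g w x)) /
        (⨆ w : W, finv (∑ x, π x * f (g w x)))) ≤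
      Real.log (finv (∑ y, ⨆ x, C x y)) := by
  set S : ℝ := ⨆ w : W, ∑ x, π x * f (g w x) with hS
  have hterm0 : ∀ w x, 0 ≤ π x * f (g w x) := fun w x => mul_nonneg (hπ0 x) (hg0 w x)
  have hsum0 : ∀ w : W, (0:ℝ) ≤ ∑ x, π x * f (g w x) := fun w =>
    Finset.sum_nonneg fun x _ => hterm0 w x
  obtain ⟨w0⟩ := ‹Nonempty W›
  have hS0 : 0 ≤ S := le_trans (hsum0 w0) (le_ciSup hbdd0 w0)
  have hCsup : ∀ y, ∀ x, C x y ≤ ⨆ x, C x y := fun y x =>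
    le_ciSup (Set.Finite.bddAbove (Set.finite_range (fun x => C x y))) x
  have hCsup0 : ∀ y, (0:ℝ) ≤ ⨆ x, C x y := fun y =>
    le_trans (hC0 (Classical.arbitrary X) y) (hCsup y _)
  -- key per-y bound
  have key : ∀ y : Y, (⨆ w : W, ∑ x, C x y * π x * f (g w x)) ≤ (⨆ x, C x y) * S := by
    intro y
    apply ciSup_le
    intro w
    calc ∑ x, C x y * π x * f (g w x)
        ≤ ∑ x, (⨆ x, C x y) * (π x * f (g w x)) := by
          apply Finset.sum_le_sum
          intro x _
          rw [mul_assoc]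
          exact mul_le_mul_of_nonneg_right (hCsup y x) (hterm0 w x)
      _ = (⨆ x, C x y) * ∑ x, π x * f (g w x) := by rw [Finset.mul_sum]
      _ ≤ (⨆ x, C x y) * S :=
          mul_le_mul_of_nonneg_left (le_ciSup hbdd0 w) (hCsup0 y)
  have hsumle : (∑ y, ⨆ w : W, ∑ x, C x y * π x * f (g w x)) ≤ (∑ y, ⨆ x, C x y) * S := by
    rw [Finset.sum_mul]
    exact Finset.sum_le_sum fun y _ => key y
  have hK0 : (0:ℝ) ≤ ∑ y, ⨆ x, C x y := Finset.sum_nonneg fun y _ => hCsup0 y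
  have hfinvS : finv S = ⨆ w : W, finv (∑ x, π x * f (g w x)) :=
    Monotone.map_ciSup_of_continuousAt hfinvc.continuousAt hfinvm hbdd0
  have main : finv (∑ y, ⨆ w : W, ∑ x, C x y * π x * f (g w x)) ≤
      finv (∑ y, ⨆ x, C x y) * (⨆ w : W, finv (∑ x, π x * f (g w x))) := by
    calc finv (∑ y, ⨆ w : W, ∑ x, C x y * π x * f (g w x))
        ≤ finv ((∑ y, ⨆ x, C x y) * S) := hfinvm hsumle
      _ = finv (∑ y, ⨆ x, C x y) * finv S := hmul _ _ hK0 hS0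
      _ = _ := by rw [hfinvS]
  refine ⟨main, ?_⟩
  have hdiv : finv (∑ y, ⨆ w : W, ∑ x, C x y * π x * f (g w x)) /
      (⨆ w : W, finv (∑ x, π x * f (g w x))) ≤ finv (∑ y, ⨆ x, C x y) := by
    rw [div_le_iff₀ hVpos]
    exact main
  exact Real.log_le_log (div_pos hVhatpos hVpos) hdiv
end

section
/- Suppose f is strictly increasing with multiplicative inverse f^{-1}. Take X = W finite, uniform prior π_x = 1/|X|, and a gain function g with f(g(w,x)) = a·1_{w=x} for some a > 0. Then the multiplicative generalized leakage equals exactly log f^{-1}(Σ_y max_x C_{x,y}); i.e., V̂_{f,f,g}[π,C] / V_{f,g}(π) = f^{-1}(Σ_y max_x C_{x,y}). -/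
/-- With `W = X`, uniform prior, and a gain `g` with `f (g w x) = a·1_{w = x}`
(`a > 0`), for strictly increasing continuous `f` with multiplicative inverse `finv`, the
multiplicative generalized leakage equals exactly `finv (∑ y, max_x C x y)`:
`V̂_{f,f,g}[π,C] / V_{f,g}(π) = finv (∑ y, max_x C x y)`. -/
theorem stmt_11 {X Y : Type*} [Fintype X] [Fintype Y] [Nonempty X] [DecidableEq X]
    (C : X → Y → ℝ) (hC0 : ∀ x y, 0 ≤ C x y) (hC1 : ∀ x, ∑ y, C x y = 1)
    (f finv : ℝ → ℝ) (hf : StrictMono f) (hfc : Continuous f)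
    (hli : Function.LeftInverse finv f)
    (hmul : ∀ a b : ℝ, 0 ≤ a → 0 ≤ b → finv (a * b) = finv a * finv b)
    (a : ℝ) (ha : 0 < a) (g : X → X → ℝ)
    (hg : ∀ w x, f (g w x) = if w = x then a else 0)
    (hpos : 0 < finv (a / (Fintype.card X : ℝ))) :
    finv (∑ y, ⨆ w : X, ∑ x, (1 / (Fintype.card X : ℝ)) * C x y * f (g w x)) /
        (⨆ w : X, finv (∑ x, (1 / (Fintype.card X : ℝ)) * f (g w x))) =
      finv (∑ y, ⨆ x, C x y) := by
  have hn : (0 : ℝ) < (Fintype.card X : ℝ) := by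
    exact_mod_cast Fintype.card_pos
  have hc : ∀ w, ∑ x, (1 / (Fintype.card X : ℝ)) * f (g w x) = a / (Fintype.card X : ℝ) := by
    intro w
    rw [Finset.sum_eq_single w]
    · rw [hg, if_pos rfl]; ring
    · intro x _ hx
      rw [hg, if_neg (Ne.symm hx), mul_zero]
    · simp
  have hinner : ∀ y w, ∑ x, (1 / (Fintype.card X : ℝ)) * C x y * f (g w x)
      = (a / (Fintype.card X : ℝ)) * C w y := by
    intro y w
    rw [Finset.sum_eq_single w]
    · rw [hg, if_pos rfl]; ring
    · intro x _ hx
      rw [hg, if_neg (Ne.symm hx), mul_zero]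
    · simp
  have han : 0 ≤ a / (Fintype.card X : ℝ) := le_of_lt (div_pos ha hn)
  have hsupC : ∀ y, 0 ≤ ⨆ x, C x y := by
    intro y
    obtain ⟨x⟩ := ‹Nonempty X›
    exact le_trans (hC0 x y) (le_ciSup (Set.Finite.bddAbove (Set.finite_range (fun x => C x y))) x)
  have h1 : ∀ y, (⨆ w : X, ∑ x, (1 / (Fintype.card X : ℝ)) * C x y * f (g w x))
      = (a / (Fintype.card X : ℝ)) * ⨆ x, C x y := by
    intro y
    rw [Real.mul_iSup_of_nonneg han]
    exact iSup_congr (hinner y)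
  have h2 : (⨆ w : X, finv (∑ x, (1 / (Fintype.card X : ℝ)) * f (g w x)))
      = finv (a / (Fintype.card X : ℝ)) := by
    simp only [hc]
    exact ciSup_const
  rw [h2]
  simp only [h1]
  rw [← Finset.mul_sum, hmul _ _ han (Finset.sum_nonneg fun y _ => hsupC y),
    mul_comm]
  exact mul_div_cancel_right₀ _ (ne_of_gt hpos)
end

section
/- Let f be strictly increasing and continuous with multiplicative inverse f^{-1}, and let C be a channel with all entries positive. For any prior π with full support, gain function g (with f∘g nonnegative and V_{f,g}(π) > 0), the max-case multiplicative leakage satisfies max_{y} V_{f,g}(δ^y) / V_{f,g}(π) ≤ max_y f^{-1}((max_x C_{x,y}) / (min_x C_{x,y})); i.e., the max-case leakage is bounded by log f^{-1}(exp(L^LDP(C))), where L^LDP(C) = log max_y (max_x C_{x,y}/min_x C_{x,y}) is the local-differential-privacy leakage. -/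
/-- For strictly increasing continuous `f` with multiplicative inverse `finv`,
a strictly positive channel `C`, full-support prior `π`, and a gain `g` with `f ∘ g ≥ 0`
and `V_{f,g}(π) > 0`, the max-case multiplicative leakage satisfies
`(max_y V_{f,g}(δ^y)) / V_{f,g}(π) ≤ max_y finv ((max_x C x y) / (min_x C x y))`. -/
theorem stmt_12 {X Y W : Type*} [Fintype X] [Fintype Y] [Nonempty X] [Nonempty Y] [Nonempty W]
    (π : X → ℝ) (hπ0 : ∀ x, 0 < π x) (hπ1 : ∑ x, π x = 1)
    (C : X → Y → ℝ) (hC0 : ∀ x y, 0 < C x y) (hC1 : ∀ x, ∑ y, C x y = 1)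
    (f finv : ℝ → ℝ) (g : W → X → ℝ)
    (hf : StrictMono f) (hfc : Continuous f) (hli : Function.LeftInverse finv f)
    (hfinvm : Monotone finv) (hfinvc : Continuous finv)
    (hmul : ∀ a b : ℝ, 0 ≤ a → 0 ≤ b → finv (a * b) = finv a * finv b)
    (hg0 : ∀ w x, 0 ≤ f (g w x))
    (hbdd : ∀ μ : X → ℝ, BddAbove (Set.range fun w : W => ∑ x, μ x * f (g w x)))
    (hVpos : 0 < ⨆ w : W, finv (∑ x, π x * f (g w x))) :
    (⨆ y, ⨆ w : W, finv (∑ x,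
        (π x * C x y / ∑ x', π x' * C x' y) * f (g w x))) /
        (⨆ w : W, finv (∑ x, π x * f (g w x))) ≤
      ⨆ y, finv ((⨆ x, C x y) / (⨅ x, C x y)) := by
  -- finv is nonneg on nonneg
  have hfinv0 : ∀ a : ℝ, 0 ≤ a → 0 ≤ finv a := by
    intro a ha
    have : a = Real.sqrt a * Real.sqrt a := (Real.mul_self_sqrt ha).symm
    rw [this, hmul _ _ (Real.sqrt_nonneg a) (Real.sqrt_nonneg a)]
    exact mul_self_nonneg _
  set S : W → ℝ := fun w => ∑ x, π x * f (g w x) with hS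
  have hS0 : ∀ w, 0 ≤ S w := fun w =>
    Finset.sum_nonneg fun x _ => mul_nonneg (hπ0 x).le (hg0 w x)
  have hbddV : BddAbove (Set.range fun w => finv (S w)) := by
    have := hfinvm.map_bddAbove (hbdd π)
    rwa [← Set.range_comp] at this
  set Vπ : ℝ := ⨆ w, finv (S w) with hVπ
  have hVnn : 0 ≤ Vπ := hVpos.le
  have hSleV : ∀ w, finv (S w) ≤ Vπ := fun w => le_ciSup hbddV w
  -- per y bound
  have key : ∀ y, (⨆ w : W, finv (∑ x,
      (π x * C x y / ∑ x', π x' * C x' y) * f (g w x))) ≤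
      finv ((⨆ x, C x y) / (⨅ x, C x y)) * Vπ := by
    intro y
    set M : ℝ := ⨆ x, C x y with hM
    set m : ℝ := ⨅ x, C x y with hm
    have hmpos : 0 < m := by
      obtain ⟨x0, hx0⟩ := exists_eq_ciInf_of_finite (f := fun x => C x y)
      rw [hm, ← hx0]; exact hC0 x0 y
    have hCleM : ∀ x, C x y ≤ M := fun x =>
      le_ciSup (f := fun x => C x y) (Set.Finite.bddAbove (Set.finite_range _)) x
    have hMpos : 0 < M := lt_of_lt_of_le (hC0 (Classical.arbitrary X) y) (hCleM _)
    set p : ℝ := ∑ x', π x' * C x' y with hp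
    have hmlep : m ≤ p := by
      calc m = ∑ x, π x * m := by rw [← Finset.sum_mul, hπ1, one_mul]
        _ ≤ p := Finset.sum_le_sum fun x _ =>
            mul_le_mul_of_nonneg_left (ciInf_le (Set.Finite.bddBelow (Set.finite_range _)) x)
              (hπ0 x).le
    have hppos : 0 < p := lt_of_lt_of_le hmpos hmlep
    have hMm0 : 0 ≤ M / m := div_nonneg hMpos.le hmpos.le
    apply ciSup_le
    intro w
    have hsum : (∑ x, (π x * C x y / p) * f (g w x)) ≤ (M / m) * S w := by
      rw [hS, Finset.mul_sum]
      apply Finset.sum_le_sum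
      intro x _
      have h1 : π x * C x y / p ≤ M / m * (π x) := by
        rw [div_le_iff₀ hppos, mul_comm (M / m) (π x), mul_assoc]
        apply mul_le_mul_of_nonneg_left _ (hπ0 x).le
        rw [div_mul_eq_mul_div, le_div_iff₀ hmpos]
        exact mul_le_mul (hCleM x) hmlep hmpos.le hMpos.le
      calc (π x * C x y / p) * f (g w x) ≤ (M / m * π x) * f (g w x) :=
            mul_le_mul_of_nonneg_right h1 (hg0 w x)
        _ = M / m * (π x * f (g w x)) := by ring
    calc finv (∑ x, (π x * C x y / p) * f (g w x)) ≤ finv ((M / m) * S w) := hfinvm hsum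
      _ = finv (M / m) * finv (S w) := hmul _ _ hMm0 (hS0 w)
      _ ≤ finv (M / m) * Vπ :=
          mul_le_mul_of_nonneg_left (hSleV w) (hfinv0 _ hMm0)
  rw [div_le_iff₀ hVpos]
  apply ciSup_le
  intro y
  calc (⨆ w : W, finv (∑ x, (π x * C x y / ∑ x', π x' * C x' y) * f (g w x))) ≤
        finv ((⨆ x, C x y) / (⨅ x, C x y)) * Vπ := key y
    _ ≤ (⨆ y, finv ((⨆ x, C x y) / (⨅ x, C x y))) * Vπ :=
        mul_le_mul_of_nonneg_right
          (le_ciSup (f := fun y => finv ((⨆ x, C x y) / (⨅ x, C x y))) (Set.Finite.bddAbove (Set.finite_range _)) y) hVnn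
end

section
/- Fix α ∈ (1,∞), a prior π with full support on a finite set X, and a posterior distribution δ on X. Let ℓ_α(t) = exp(((α-1)/α)·t) with inverse ℓ_α^{-1}(s) = (α/(α-1))·log s, and define the pointwise information gain γ(w,x) = log(w_x/π_x) for probability distributions w on X. Then sup_w ℓ_α^{-1}(Σ_x δ_x · ℓ_α(γ(w,x))) = (1/(α-1)) · log Σ_x δ_x^α / π_x^{α-1} = D_α(δ ‖ π), the Rényi divergence of order α, with the optimum attained at w_x* = (δ_x^α/π_x^{α-1}) / Σ_{x'} (δ_{x'}^α/π_{x'}^{α-1}). -/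
/-- For `α > 1`, full-support `π` and `δ` on finite `X`, with
`ℓ_α(t) = exp(((α-1)/α)·t)`, `ℓ_α⁻¹(s) = (α/(α-1))·log s`, and pointwise information gain
`γ(w,x) = log (w x / π x)`, the supremum over (full-support) distributions `w` of
`ℓ_α⁻¹(∑ x, δ x * ℓ_α (γ (w, x)))` is the Rényi divergence
`D_α(δ‖π) = (1/(α-1))·log ∑ x, (δ x)^α (π x)^(1-α)`, attained at
`w* x = (δ x ^ α / π x ^ (α-1)) / ∑ x', δ x' ^ α / π x' ^ (α-1)`. -/
theorem stmt_13 {X : Type*} [Fintype X] [Nonempty X]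
    (π δ : X → ℝ) (hπ : ∀ x, 0 < π x) (hπ1 : ∑ x, π x = 1)
    (hδ : ∀ x, 0 < δ x) (hδ1 : ∑ x, δ x = 1)
    (α : ℝ) (hα : 1 < α) :
    IsGreatest
      {v : ℝ | ∃ w : X → ℝ, (∀ x, 0 < w x) ∧ ∑ x, w x = 1 ∧
        v = α / (α - 1) * Real.log
          (∑ x, δ x * Real.exp ((α - 1) / α * Real.log (w x / π x)))}
      (1 / (α - 1) * Real.log (∑ x, δ x ^ α * π x ^ (1 - α))) ∧
    α / (α - 1) * Real.log (∑ x, δ x * Real.exp ((α - 1) / α *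
        Real.log ((δ x ^ α / π x ^ (α - 1) / ∑ x', δ x' ^ α / π x' ^ (α - 1)) / π x))) =
      1 / (α - 1) * Real.log (∑ x, δ x ^ α * π x ^ (1 - α)) := by
  have hα0 : (0:ℝ) < α := by linarith
  have hα1 : (0:ℝ) < α - 1 := by linarith
  set β : ℝ := (α - 1) / α with hβdef
  have hβ0 : 0 < β := div_pos hα1 hα0
  have hβ1 : β < 1 := by rw [hβdef, div_lt_one hα0]; linarith
  have hβc : 1 - β = α⁻¹ := by rw [hβdef]; field_simp; ring
  have htpos : ∀ x, 0 < δ x ^ α * π x ^ (1 - α) := fun x =>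
    mul_pos (Real.rpow_pos_of_pos (hδ x) _) (Real.rpow_pos_of_pos (hπ x) _)
  set S : ℝ := ∑ x, δ x ^ α * π x ^ (1 - α) with hSdef
  have hS : 0 < S := Finset.sum_pos (fun x _ => htpos x) Finset.univ_nonempty
  -- rewrite the w* normalizer
  have hSrw : ∀ x, δ x ^ α / π x ^ (α - 1) = δ x ^ α * π x ^ (1 - α) := fun x => by
    rw [div_eq_mul_inv, ← Real.rpow_neg (hπ x).le, neg_sub]
  -- exp/log to rpow
  have hexp : ∀ u : ℝ, 0 < u → Real.exp (β * Real.log u) = u ^ β := fun u hu => by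
    rw [Real.rpow_def_of_pos hu, mul_comm]
  -- key pointwise identity: δ x * (w/π)^β = S^(α⁻¹) * (w^β * (t x / S)^(1-β))
  have hpoint : ∀ (x : X) (w : ℝ), 0 < w →
      δ x * (w / π x) ^ β = S ^ (α⁻¹) * (w ^ β * (δ x ^ α * π x ^ (1 - α) / S) ^ (1 - β)) := by
    intro x w hw
    rw [hβc, Real.div_rpow hw.le (hπ x).le,
      Real.div_rpow (htpos x).le hS.le,
      Real.mul_rpow (Real.rpow_pos_of_pos (hδ x) _).le (Real.rpow_pos_of_pos (hπ x) _).le]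
    rw [← Real.rpow_mul (hδ x).le, ← Real.rpow_mul (hπ x).le]
    have h1 : α * α⁻¹ = 1 := mul_inv_cancel₀ hα0.ne'
    have h2 : (1 - α) * α⁻¹ = -β := by rw [hβdef]; field_simp; ring
    rw [h1, h2, Real.rpow_neg (hπ x).le, Real.rpow_one]
    have hπβ : (0:ℝ) < π x ^ β := Real.rpow_pos_of_pos (hπ x) _
    have hSα : (0:ℝ) < S ^ (α⁻¹) := Real.rpow_pos_of_pos hS _
    field_simp
  -- value at w*
  have heq : α / (α - 1) * Real.log (∑ x, δ x * Real.exp ((α - 1) / α *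
        Real.log ((δ x ^ α / π x ^ (α - 1) / ∑ x', δ x' ^ α / π x' ^ (α - 1)) / π x))) =
      1 / (α - 1) * Real.log S := by
    have hw' : ∀ x, (0:ℝ) < δ x ^ α * π x ^ (1 - α) / S := fun x => div_pos (htpos x) hS
    have hsum : (∑ x, δ x * Real.exp ((α - 1) / α *
        Real.log ((δ x ^ α / π x ^ (α - 1) / ∑ x', δ x' ^ α / π x' ^ (α - 1)) / π x)))
        = S ^ (α⁻¹) := by
      have : ∀ x : X, δ x * Real.exp ((α - 1) / α *
          Real.log ((δ x ^ α / π x ^ (α - 1) / ∑ x', δ x' ^ α / π x' ^ (α - 1)) / π x))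
          = S ^ (α⁻¹) * (δ x ^ α * π x ^ (1 - α) / S) := by
        intro x
        have hr : (δ x ^ α / π x ^ (α - 1) / ∑ x', δ x' ^ α / π x' ^ (α - 1))
            = δ x ^ α * π x ^ (1 - α) / S := by
          simp only [hSrw]
          rw [← hSdef]
        rw [hr]
        have hpos : (0:ℝ) < δ x ^ α * π x ^ (1 - α) / S / π x :=
          div_pos (hw' x) (hπ x)
        rw [hexp _ hpos, hpoint x _ (hw' x)]
        -- now reduce: (t/S)^β * (t/S)^(1-β) = t/S
        rw [mul_comm ((δ x ^ α * π x ^ (1 - α) / S) ^ β) _,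
          ← Real.rpow_add (hw' x), sub_add_cancel, Real.rpow_one]
      rw [Finset.sum_congr rfl fun x _ => this x, ← Finset.mul_sum,
        ← Finset.sum_div, ← hSdef, div_self hS.ne', mul_one]
    rw [hsum, Real.log_rpow hS]
    field_simp
  refine ⟨⟨?_, ?_⟩, heq⟩
  · -- membership: take w = w*
    refine ⟨fun x => δ x ^ α / π x ^ (α - 1) / ∑ x', δ x' ^ α / π x' ^ (α - 1),
      fun x => ?_, ?_, ?_⟩
    · have : (0:ℝ) < ∑ x', δ x' ^ α / π x' ^ (α - 1) := by
        simp only [hSrw]; exact hS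
      exact div_pos (by rw [hSrw]; exact htpos x) this
    · simp only [hSrw]
      rw [← Finset.sum_div, ← hSdef, div_self hS.ne']
    · exact heq.symm
  · -- upper bound
    rintro v ⟨w, hw, hw1, rfl⟩
    have hterm : ∀ x : X, δ x * Real.exp ((α - 1) / α * Real.log (w x / π x))
        = δ x * (w x / π x) ^ β := fun x => by
      rw [hexp _ (div_pos (hw x) (hπ x))]
    have hTpos : 0 < ∑ x, δ x * (w x / π x) ^ β :=
      Finset.sum_pos (fun x _ => mul_pos (hδ x)
        (Real.rpow_pos_of_pos (div_pos (hw x) (hπ x)) _)) Finset.univ_nonempty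
    have hbound : (∑ x, δ x * (w x / π x) ^ β) ≤ S ^ (α⁻¹) := by
      have hle : ∀ x : X, δ x * (w x / π x) ^ β
          ≤ S ^ (α⁻¹) * (β * w x + (1 - β) * (δ x ^ α * π x ^ (1 - α) / S)) := by
        intro x
        rw [hpoint x _ (hw x)]
        refine mul_le_mul_of_nonneg_left ?_ (Real.rpow_pos_of_pos hS _).le
        exact Real.geom_mean_le_arith_mean2_weighted hβ0.le (by linarith) (hw x).le
          (div_pos (htpos x) hS).le (by ring)
      calc (∑ x, δ x * (w x / π x) ^ β)
          ≤ ∑ x, S ^ (α⁻¹) * (β * w x + (1 - β) * (δ x ^ α * π x ^ (1 - α) / S)) :=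
            Finset.sum_le_sum fun x _ => hle x
        _ = S ^ (α⁻¹) * (β * ∑ x, w x + (1 - β) * ((∑ x, δ x ^ α * π x ^ (1 - α)) / S)) := by
            rw [← Finset.mul_sum, Finset.sum_add_distrib, ← Finset.mul_sum,
              ← Finset.mul_sum, ← Finset.sum_div]
        _ = S ^ (α⁻¹) := by
            rw [hw1, ← hSdef, div_self hS.ne']; ring
    simp only [← hβdef] at hterm ⊢
    simp only [hterm]
    have hlog : Real.log (∑ x, δ x * (w x / π x) ^ β) ≤ α⁻¹ * Real.log S := by
      calc Real.log (∑ x, δ x * (w x / π x) ^ β) ≤ Real.log (S ^ (α⁻¹)) :=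
            Real.log_le_log hTpos hbound
        _ = α⁻¹ * Real.log S := Real.log_rpow hS _
    calc α / (α - 1) * Real.log (∑ x, δ x * (w x / π x) ^ β)
        ≤ α / (α - 1) * (α⁻¹ * Real.log S) :=
          mul_le_mul_of_nonneg_left hlog (by positivity)
      _ = 1 / (α - 1) * Real.log S := by field_simp
end

section
/- Fix α ∈ (1,∞), a full-support prior π on finite X, and a channel C from X to Y. Let ℓ_α(t) = exp(((α-1)/α)·t). Then the Kolmogorov–Nagumo ℓ_α-average over y of the pointwise α-leakages D_α(δ^y ‖ π), weighted by p(y), equals the Sibson mutual information of order α: ℓ_α^{-1}(Σ_y p(y)·ℓ_α(D_α(δ^y‖π))) = (α/(α-1)) · log Σ_y (Σ_x π_x C_{x,y}^α)^{1/α} = I_α^S(X;Y). -/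
/-- For `α > 1`, full-support prior `π` and channel `C` with `p y > 0` for all `y`,
the Kolmogorov–Nagumo `ℓ_α`-average of the pointwise α-leakages `D_α(δ^y ‖ π)`, weighted by
`p y`, equals the Sibson mutual information of order `α`:
`ℓ_α⁻¹(∑ y, p y · ℓ_α(D_α(δ^y‖π))) = (α/(α-1)) · log ∑ y, (∑ x, π x * (C x y)^α)^(1/α)`. -/
theorem stmt_14 {X Y : Type*} [Fintype X] [Fintype Y] [Nonempty X]
    (π : X → ℝ) (hπ : ∀ x, 0 < π x) (hπ1 : ∑ x, π x = 1)
    (C : X → Y → ℝ) (hC0 : ∀ x y, 0 ≤ C x y) (hC1 : ∀ x, ∑ y, C x y = 1)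
    (hp : ∀ y, 0 < ∑ x, π x * C x y)
    (α : ℝ) (hα : 1 < α) :
    α / (α - 1) * Real.log (∑ y, (∑ x, π x * C x y) *
        Real.exp ((α - 1) / α * (1 / (α - 1) * Real.log
          (∑ x, (π x * C x y / ∑ x', π x' * C x' y) ^ α * π x ^ (1 - α))))) =
      α / (α - 1) * Real.log (∑ y, (∑ x, π x * C x y ^ α) ^ (1 / α)) := by
  have hα0 : (0:ℝ) < α := by linarith
  have hα1 : α - 1 ≠ 0 := by linarith
  congr 2
  apply Finset.sum_congr rfl
  intro y _
  have hp' : 0 < ∑ x, π x * C x y := hp y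
  -- some x₀ with positive mass
  obtain ⟨x₀, -, hx₀⟩ := Finset.exists_lt_of_sum_lt
    (by simpa using hp' : ∑ _x : X, (0:ℝ) < ∑ x, π x * C x y)
  have hc0 : 0 < C x₀ y := by nlinarith [hπ x₀, hC0 x₀ y]
  have hT : 0 < ∑ x, π x * C x y ^ α := by
    apply Finset.sum_pos'
      (fun x _ => mul_nonneg (hπ x).le (Real.rpow_nonneg (hC0 x y) α))
    exact ⟨x₀, Finset.mem_univ _, mul_pos (hπ x₀) (Real.rpow_pos_of_pos hc0 α)⟩
  have hS : (∑ x, (π x * C x y / ∑ x', π x' * C x' y) ^ α * π x ^ (1 - α))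
      = (∑ x, π x * C x y ^ α) / (∑ x, π x * C x y) ^ α := by
    rw [Finset.sum_div]
    apply Finset.sum_congr rfl
    intro x _
    rw [Real.div_rpow (mul_nonneg (hπ x).le (hC0 x y)) hp'.le,
      Real.mul_rpow (hπ x).le (hC0 x y)]
    have : π x ^ α * C x y ^ α / (∑ x', π x' * C x' y) ^ α * π x ^ (1 - α)
        = (π x ^ α * π x ^ (1 - α)) * C x y ^ α / (∑ x', π x' * C x' y) ^ α := by
      ring
    rw [this, ← Real.rpow_add (hπ x)]
    norm_num
  rw [hS]
  have hSpos : 0 < (∑ x, π x * C x y ^ α) / (∑ x, π x * C x y) ^ α := by positivity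
  have hcoef : (α - 1) / α * (1 / (α - 1) * Real.log
      ((∑ x, π x * C x y ^ α) / (∑ x, π x * C x y) ^ α))
      = Real.log ((∑ x, π x * C x y ^ α) / (∑ x, π x * C x y) ^ α) * (1 / α) := by
    field_simp
  rw [hcoef, ← Real.rpow_def_of_pos hSpos,
    Real.div_rpow hT.le (Real.rpow_nonneg hp'.le α)]
  have hpp : ((∑ x, π x * C x y) ^ α) ^ (1/α) = ∑ x, π x * C x y := by
    rw [← Real.rpow_mul hp'.le, mul_one_div, div_self (ne_of_gt hα0), Real.rpow_one]
  rw [hpp]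
  field_simp
end

section
/- For α > 1, the multiplicative generalized leakage with f = h = f_α (where f_α(t) = t^{(α-1)/α}) and gain g(w,x) = w_x equals the Arimoto mutual information of order α: log(V̂_{f_α,f_α,g}[π,C] / V_{f_α,g}(π)) = H_α(π) − H_α(X|Y) = I_α^A(X;Y), where H_α(X|Y) = (α/(1-α))·log Σ_y p(y)·(Σ_x (δ^y_x)^α)^{1/α} is Arimoto conditional entropy. -/
/-- For `α > 1`, with `f_α(t) = t^((α-1)/α)`, gain `g(w,x) = w x`, closed-form
vulnerabilities `V_{f_α,g}(π) = (∑ x, π x ^ α)^(1/(α-1))` and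
`V̂_{f_α,f_α,g}[π,C] = f_α⁻¹(∑ y, p y · f_α(V_{f_α,g}(δ^y)))`, the multiplicative leakage
equals the Arimoto mutual information:
`log (V̂ / V) = H_α(π) − H_α(X|Y)` with `H_α(π) = (1/(1-α)) log ∑ π^α` and
`H_α(X|Y) = (α/(1-α)) log ∑ y, p y (∑ x (δ^y x)^α)^(1/α)`. -/
theorem stmt_15 {X Y : Type*} [Fintype X] [Fintype Y] [Nonempty X]
    (π : X → ℝ) (hπ : ∀ x, 0 < π x) (hπ1 : ∑ x, π x = 1)
    (C : X → Y → ℝ) (hC0 : ∀ x y, 0 ≤ C x y) (hC1 : ∀ x, ∑ y, C x y = 1)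
    (α : ℝ) (hα : 1 < α) :
    Real.log
      ((∑ y, (∑ x, π x * C x y) *
          ((∑ x, (π x * C x y / ∑ x', π x' * C x' y) ^ α) ^ (1 / (α - 1)))
            ^ ((α - 1) / α)) ^ (α / (α - 1)) /
        (∑ x, π x ^ α) ^ (1 / (α - 1))) =
      1 / (1 - α) * Real.log (∑ x, π x ^ α) -
        α / (1 - α) * Real.log (∑ y, (∑ x, π x * C x y) *
          (∑ x, (π x * C x y / ∑ x', π x' * C x' y) ^ α) ^ (1 / α)) := by
  have hα0 : (0:ℝ) < α := lt_trans one_pos hα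
  have hα1 : α - 1 ≠ 0 := sub_ne_zero.mpr (ne_of_gt hα)
  -- inner rpow rewrite
  have hδnn : ∀ (y : Y) (x : X), 0 ≤ π x * C x y / ∑ x', π x' * C x' y := fun y x =>
    div_nonneg (mul_nonneg (hπ x).le (hC0 x y))
      (Finset.sum_nonneg fun x' _ => mul_nonneg (hπ x').le (hC0 x' y))
  have hsumnn : ∀ y : Y, 0 ≤ ∑ x, (π x * C x y / ∑ x', π x' * C x' y) ^ α := fun y =>
    Finset.sum_nonneg fun x _ => Real.rpow_nonneg (hδnn y x) α
  have hinner : ∀ y : Y,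
      ((∑ x, (π x * C x y / ∑ x', π x' * C x' y) ^ α) ^ (1 / (α - 1))) ^ ((α - 1) / α)
        = (∑ x, (π x * C x y / ∑ x', π x' * C x' y) ^ α) ^ (1 / α) := by
    intro y
    rw [← Real.rpow_mul (hsumnn y)]
    congr 1
    field_simp
  simp only [hinner]
  set S : ℝ := ∑ x, π x ^ α with hS
  set A : ℝ := ∑ y, (∑ x, π x * C x y) *
      (∑ x, (π x * C x y / ∑ x', π x' * C x' y) ^ α) ^ (1 / α) with hA
  have hSpos : 0 < S := by
    apply Finset.sum_pos
    · intro x _; exact Real.rpow_pos_of_pos (hπ x) α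
    · exact Finset.univ_nonempty
  have hApos : 0 < A := by
    have hp1 : ∑ y, ∑ x, π x * C x y = 1 := by
      rw [Finset.sum_comm]
      simp_rw [← Finset.mul_sum, hC1, mul_one, hπ1]
    have hy0 : ∃ y : Y, 0 < ∑ x, π x * C x y := by
      by_contra h
      push_neg at h
      have : (∑ y, ∑ x, π x * C x y) ≤ 0 :=
        Finset.sum_nonpos fun y _ => h y
      linarith [hp1]
    obtain ⟨y0, hy0⟩ := hy0
    apply Finset.sum_pos'
    · intro y _
      exact mul_nonneg (Finset.sum_nonneg fun x _ => mul_nonneg (hπ x).le (hC0 x y))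
        (Real.rpow_nonneg (hsumnn y) _)
    · refine ⟨y0, Finset.mem_univ _, ?_⟩
      apply mul_pos hy0
      apply Real.rpow_pos_of_pos
      have hδ1 : ∑ x, π x * C x y0 / ∑ x', π x' * C x' y0 = 1 := by
        rw [← Finset.sum_div, div_self (ne_of_gt hy0)]
      have : ∃ x : X, 0 < π x * C x y0 / ∑ x', π x' * C x' y0 := by
        by_contra h
        push_neg at h
        have : (∑ x, π x * C x y0 / ∑ x', π x' * C x' y0) ≤ 0 :=
          Finset.sum_nonpos fun x _ => h x
        linarith [hδ1]
      obtain ⟨x0, hx0⟩ := this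
      apply Finset.sum_pos'
      · intro x _; exact Real.rpow_nonneg (hδnn y0 x) α
      · exact ⟨x0, Finset.mem_univ _, Real.rpow_pos_of_pos hx0 α⟩
  rw [Real.log_div (ne_of_gt (Real.rpow_pos_of_pos hApos _))
      (ne_of_gt (Real.rpow_pos_of_pos hSpos _)),
    Real.log_rpow hApos, Real.log_rpow hSpos]
  have h1α : (1:ℝ) - α ≠ 0 := by intro h; apply hα1; linarith
  field_simp
  ring
end

section
/- Fix α > 1 and β ≥ 1 with β ≥ α/(α-1). With f_α(t) = t^{(α-1)/α}, h_{(α,β)}(t) = t^{(α-1)β/α}, g(w,x) = w_x, and prior and posterior vulnerabilities V_{f_α,g}(π) = (Σ_x π_x^α)^{1/(α-1)} and V̂ = h_{(α,β)}^{-1}(Σ_y p(y)·h_{(α,β)}(V_{f_α,g}(δ^y))), the multiplicative leakage equals log(V̂ / V_{f_α,g}(π)) = (α/((α-1)β)) · log Σ_y p(y)^{1-β} · (Σ_x π_x^α C_{x,y}^α / Σ_x π_x^α)^{β/α}. -/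
/-- For `α > 1`, `β ≥ 1` with `β ≥ α/(α-1)`, with `f_α(t)=t^((α-1)/α)`,
`h_{(α,β)}(t)=t^((α-1)β/α)`, gain `g(w,x)=w x`, prior vulnerability
`V_{f_α,g}(π) = (∑ x, π x ^ α)^(1/(α-1))` and
`V̂ = h_{(α,β)}⁻¹(∑ y, p y · h_{(α,β)}(V_{f_α,g}(δ^y)))`, the multiplicative leakage is
`log (V̂/V) = (α/((α-1)β)) · log ∑ y, (p y)^(1-β) · (∑ x π^α C^α / ∑ x π^α)^(β/α)`. -/
theorem stmt_17 {X Y : Type*} [Fintype X] [Fintype Y] [Nonempty X]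
    (π : X → ℝ) (hπ : ∀ x, 0 < π x) (hπ1 : ∑ x, π x = 1)
    (C : X → Y → ℝ) (hC0 : ∀ x y, 0 < C x y) (hC1 : ∀ x, ∑ y, C x y = 1)
    (α β : ℝ) (hα : 1 < α) (hβ : 1 ≤ β) (hβ2 : α / (α - 1) ≤ β) :
    Real.log
      ((∑ y, (∑ x, π x * C x y) *
          ((∑ x, (π x * C x y / ∑ x', π x' * C x' y) ^ α) ^ (1 / (α - 1)))
            ^ ((α - 1) * β / α)) ^ (α / ((α - 1) * β)) /
        (∑ x, π x ^ α) ^ (1 / (α - 1))) =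
      α / ((α - 1) * β) * Real.log (∑ y, (∑ x, π x * C x y) ^ (1 - β) *
        ((∑ x, π x ^ α * C x y ^ α) / ∑ x, π x ^ α) ^ (β / α)) := by
  have hY : Nonempty Y := by
    by_contra h
    have := hC1 (Classical.arbitrary X)
    rw [not_nonempty_iff] at h
    simp at this
  have hα0 : (0:ℝ) < α := by linarith
  have hα1 : (0:ℝ) < α - 1 := by linarith
  have hβ0 : (0:ℝ) < β := by linarith
  set p : Y → ℝ := fun y => ∑ x, π x * C x y with hp_def
  set A : Y → ℝ := fun y => ∑ x, π x ^ α * C x y ^ α with hA_def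
  have hS : 0 < ∑ x, π x ^ α :=
    Finset.sum_pos (fun x _ => Real.rpow_pos_of_pos (hπ x) α) Finset.univ_nonempty
  set S : ℝ := ∑ x, π x ^ α with hS_def
  have hp : ∀ y, 0 < p y := fun y =>
    Finset.sum_pos (fun x _ => mul_pos (hπ x) (hC0 x y)) Finset.univ_nonempty
  have hA : ∀ y, 0 < A y := fun y =>
    Finset.sum_pos (fun x _ => mul_pos (Real.rpow_pos_of_pos (hπ x) α)
      (Real.rpow_pos_of_pos (hC0 x y) α)) Finset.univ_nonempty
  have hterm : ∀ y, (p y) *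
      ((∑ x, (π x * C x y / p y) ^ α) ^ (1 / (α - 1))) ^ ((α - 1) * β / α)
      = (p y) ^ (1 - β) * (A y) ^ (β / α) := by
    intro y
    have h1 : (∑ x, (π x * C x y / p y) ^ α) = A y / (p y) ^ α := by
      rw [hA_def, Finset.sum_div]
      refine Finset.sum_congr rfl fun x _ => ?_
      rw [Real.div_rpow (mul_pos (hπ x) (hC0 x y)).le (hp y).le,
        Real.mul_rpow (hπ x).le (hC0 x y).le]
    have he : 1 / (α - 1) * ((α - 1) * β / α) = β / α := by
      field_simp
    have he2 : α * (β / α) = β := by field_simp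
    rw [h1, ← Real.rpow_mul (div_nonneg (hA y).le (Real.rpow_pos_of_pos (hp y) α).le), he,
      Real.div_rpow (hA y).le (Real.rpow_pos_of_pos (hp y) α).le, ← Real.rpow_mul (hp y).le, he2,
      Real.rpow_sub (hp y), Real.rpow_one]
    ring
  rw [Finset.sum_congr rfl fun y _ => hterm y]
  have hSpow : (0:ℝ) < S ^ (β / α) := Real.rpow_pos_of_pos hS _
  have hT2 : (∑ y, (p y) ^ (1 - β) * (A y) ^ (β / α))
      = S ^ (β / α) * ∑ y, (p y) ^ (1 - β) * (A y / S) ^ (β / α) := by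
    rw [Finset.mul_sum]
    refine Finset.sum_congr rfl fun y _ => ?_
    rw [Real.div_rpow (hA y).le hS.le]
    field_simp
  have hR : 0 < ∑ y, (p y) ^ (1 - β) * (A y / S) ^ (β / α) := by
    refine Finset.sum_pos (fun y _ => mul_pos (Real.rpow_pos_of_pos (hp y) _)
      (Real.rpow_pos_of_pos (div_pos (hA y) hS) _)) Finset.univ_nonempty
  set R : ℝ := ∑ y, (p y) ^ (1 - β) * (A y / S) ^ (β / α) with hR_def
  rw [hT2, Real.log_div (by positivity) (by positivity),
    Real.log_rpow (by positivity), Real.log_mul (by positivity) (by positivity),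
    Real.log_rpow hS, Real.log_rpow hS]
  have hc : α / ((α - 1) * β) * (β / α) = 1 / (α - 1) := by
    field_simp
  linear_combination hc * Real.log S
end
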